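/- Every vertex of the polytope {w ∈ R^N : Aw = d, w ≥ 0}, where A is an m × N real matrix of rank r, has at most r nonzero coordinates. In particular, since the barycenter constraint matrix for measures of sizes m_1, ..., m_n has rank at most Σ m_i − n + 1 (each of the n groups of rows sums to the all-ones row vector), every vertex of the barycenter transport polytope has at most Σ_{i=1}^n m_i − n + 1 nonzero coordinates. -/

import Mathlib

open scoped Classical

open Finset

/-- Key lemma: any vertex of `{w : Aw = d, w ≥ 0}` has at most `rank A` nonzero
coordinates, over arbitrary finite index types. -/
lemma vs_support_le_rank {m n : Type*} [Fintype m] [Fintype n]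
    (A : Matrix m n ℝ) (d : m → ℝ) (w : n → ℝ)
    (hw : w ∈ Set.extremePoints ℝ {w : n → ℝ | A.mulVec w = d ∧ ∀ j, 0 ≤ w j}) :
    (Finset.univ.filter (fun j => w j ≠ 0)).card ≤ A.rank := by
  classical
  obtain ⟨⟨hAw, hw0⟩, hext⟩ := hw
  -- Step 1: any kernel vector supported in the support of `w` is zero.
  have key : ∀ z : n → ℝ, A.mulVec z = 0 → (∀ j, w j = 0 → z j = 0) → z = 0 := by
    intro z hz hsupp
    by_contra hz0
    have hT : (Finset.univ.filter fun j => z j ≠ 0).Nonempty := by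
      rcases Function.ne_iff.mp hz0 with ⟨j, hj⟩
      exact ⟨j, Finset.mem_filter.mpr ⟨Finset.mem_univ _, hj⟩⟩
    set T := Finset.univ.filter fun j => z j ≠ 0 with hTdef
    set ε : ℝ := T.inf' hT (fun j => w j / |z j|) with hε
    have hzT : ∀ j ∈ T, z j ≠ 0 := fun j hj => (Finset.mem_filter.mp hj).2
    have hεpos : 0 < ε := by
      rw [hε, Finset.lt_inf'_iff]
      intro j hj
      have hzj : z j ≠ 0 := hzT j hj
      have hwj : 0 < w j := by
        rcases lt_or_eq_of_le (hw0 j) with h | h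
        · exact h
        · exact absurd (hsupp j h.symm) hzj
      exact div_pos hwj (abs_pos.mpr hzj)
    have hbound : ∀ j, ε * |z j| ≤ w j := by
      intro j
      by_cases hzj : z j = 0
      · simp [hzj, hw0 j]
      · have hj : j ∈ T := Finset.mem_filter.mpr ⟨Finset.mem_univ _, hzj⟩
        have h1 : ε ≤ w j / |z j| := Finset.inf'_le _ hj
        have h2 : 0 < |z j| := abs_pos.mpr hzj
        calc ε * |z j| ≤ (w j / |z j|) * |z j| := by nlinarith
          _ = w j := div_mul_cancel₀ _ (ne_of_gt h2)
    have hmem : ∀ (s : ℝ), |s| = 1 →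
        (w + (s * ε) • z) ∈ {w : n → ℝ | A.mulVec w = d ∧ ∀ j, 0 ≤ w j} := by
      intro s hs
      constructor
      · rw [Matrix.mulVec_add, Matrix.mulVec_smul, hz, hAw]
        simp
      · intro j
        have h1 : |(s * ε) * z j| ≤ ε * |z j| := by
          rw [abs_mul, abs_mul, hs]
          simp [abs_of_pos hεpos, le_refl]
        have h2 := hbound j
        have h3 := neg_abs_le ((s * ε) * z j)
        simp only [Pi.add_apply, Pi.smul_apply, smul_eq_mul]
        linarith
    have hx₁ := hmem 1 (by norm_num)
    have hx₂ := hmem (-1) (by norm_num)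
    have hseg : w ∈ openSegment ℝ (w + (1 * ε) • z) (w + ((-1) * ε) • z) := by
      refine ⟨1/2, 1/2, by norm_num, by norm_num, by norm_num, ?_⟩
      module
    have := hext hx₁ hx₂ hseg
    have hεz : (1 * ε) • z = 0 := by
      have : w + (1 * ε) • z = w := this
      have := congrArg (fun v => v - w) this
      simpa [add_sub_cancel_left] using this
    have : z = 0 := by
      have hne : (1 : ℝ) * ε ≠ 0 := by simpa using ne_of_gt hεpos
      exact (smul_eq_zero.mp hεz).resolve_left hne
    exact hz0 this
  -- Step 2: the corresponding columns of `A` are linearly independent.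
  set S := Finset.univ.filter (fun j => w j ≠ 0) with hS
  let B : Matrix m S ℝ := Matrix.of fun p (j : S) => A p j.1
  have hBz : ∀ c : S → ℝ,
      B.mulVec c = A.mulVec (fun j => if h : j ∈ S then c ⟨j, h⟩ else 0) := by
    intro c
    set z : n → ℝ := fun j => if h : j ∈ S then c ⟨j, h⟩ else 0 with hzdef
    funext p
    have h1 : B.mulVec c p = ∑ j ∈ S, A p j * z j := by
      rw [Matrix.mulVec, dotProduct, Finset.univ_eq_attach,
        ← Finset.sum_attach S (fun j => A p j * z j)]
      apply Finset.sum_congr rfl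
      intro j _
      simp [B, hzdef, dif_pos j.2]
    have h2 : A.mulVec z p = ∑ j ∈ S, A p j * z j := by
      rw [Matrix.mulVec, dotProduct]
      apply (Finset.sum_subset (Finset.subset_univ S) ?_).symm
      intro x _ hx
      simp [hzdef, dif_neg hx]
    rw [h1, ← h2]
  have hinj : Function.Injective B.mulVecLin := by
    rw [← LinearMap.ker_eq_bot, LinearMap.ker_eq_bot']
    intro c hc
    set z : n → ℝ := fun j => if h : j ∈ S then c ⟨j, h⟩ else 0 with hzdef
    have hz0 : A.mulVec z = 0 := by
      rw [← hBz c]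
      exact hc
    have hzsupp : ∀ j, w j = 0 → z j = 0 := by
      intro j hj
      have : j ∉ S := by simp [hS, hj]
      simp [hzdef, dif_neg this]
    have := key z hz0 hzsupp
    funext j
    have := congrFun this j.1
    simpa [hzdef, dif_pos j.2] using this
  have hrange : LinearMap.range B.mulVecLin ≤ LinearMap.range A.mulVecLin := by
    rintro _ ⟨c, rfl⟩
    exact ⟨fun j => if h : j ∈ S then c ⟨j, h⟩ else 0,
      by rw [Matrix.mulVecLin_apply, Matrix.mulVecLin_apply, hBz c]⟩
  have h1 : S.card = Module.finrank ℝ (LinearMap.range B.mulVecLin) := by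
    rw [LinearMap.finrank_range_of_inj hinj, Module.finrank_pi, Fintype.card_coe]
  rw [h1]
  exact Submodule.finrank_mono hrange

/-- The barycenter constraint matrix has rank at most `∑ m i - n + 1`. -/
lemma vs_bary_rank (n : ℕ) (m : Fin n → ℕ) (hm : ∀ i, 1 ≤ m i) :
    (Matrix.of (fun (p : Σ i : Fin n, Fin (m i)) (s : ∀ i, Fin (m i)) =>
        if s p.1 = p.2 then (1 : ℝ) else 0)).rank ≤ ∑ i, m i - n + 1 := by
  classical
  set A := (Matrix.of (fun (p : Σ i : Fin n, Fin (m i)) (s : ∀ i, Fin (m i)) =>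
      if s p.1 = p.2 then (1 : ℝ) else 0)) with hA
  rcases Nat.eq_zero_or_pos n with hn | hn
  · have h0 : Fintype.card (Σ i : Fin n, Fin (m i)) = 0 := by
      subst hn
      simp
    calc A.rank ≤ Fintype.card (Σ i : Fin n, Fin (m i)) := A.rank_le_card_height
      _ = 0 := h0
      _ ≤ ∑ i, m i - n + 1 := Nat.zero_le _
  · -- pick distinguished indices
    set i₀ : Fin n := ⟨0, hn⟩ with hi₀
    set j0 : ∀ i : Fin n, Fin (m i) := fun i => ⟨0, hm i⟩ with hj0
    set P : Finset (Σ i : Fin n, Fin (m i)) :=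
      Finset.univ.filter (fun p => p.1 = i₀ ∨ p.2 ≠ j0 p.1) with hP
    set T : Finset ((∀ i, Fin (m i)) → ℝ) := P.image (fun p => A p) with hT
    -- each group of rows sums to the all-ones vector
    have hones : ∀ i : Fin n, ∑ j : Fin (m i), A ⟨i, j⟩ = fun _ => (1 : ℝ) := by
      intro i
      funext s
      rw [Finset.sum_apply]
      simp [hA]
    -- every row is in the span of the rows indexed by `P`
    have hspan : ∀ p : (Σ i : Fin n, Fin (m i)),
        A p ∈ Submodule.span ℝ (T : Set ((∀ i, Fin (m i)) → ℝ)) := by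
      rintro ⟨i, j⟩
      by_cases hp : (⟨i, j⟩ : Σ i : Fin n, Fin (m i)).1 = i₀ ∨
          (⟨i, j⟩ : Σ i : Fin n, Fin (m i)).2 ≠ j0 i
      · apply Submodule.subset_span
        exact Finset.mem_coe.mpr (Finset.mem_image_of_mem _
          (Finset.mem_filter.mpr ⟨Finset.mem_univ _, hp⟩))
      · push_neg at hp
        obtain ⟨hne, hj⟩ := hp
        have hj' : j = j0 i := by simpa using hj
        subst hj'
        have hrow : A ⟨i, j0 i⟩ =
            (∑ j' : Fin (m i₀), A ⟨i₀, j'⟩) -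
              ∑ j' ∈ Finset.univ.erase (j0 i), A ⟨i, j'⟩ := by
          have hsum : A ⟨i, j0 i⟩ + ∑ j' ∈ Finset.univ.erase (j0 i), A ⟨i, j'⟩ =
              ∑ j' : Fin (m i), A ⟨i, j'⟩ :=
            Finset.add_sum_erase Finset.univ (fun j' => A ⟨i, j'⟩) (Finset.mem_univ (j0 i))
          rw [hones i₀, ← hones i, ← hsum]
          abel
        rw [hrow]
        apply sub_mem
        · apply Submodule.sum_mem
          intro j' _
          apply Submodule.subset_span
          refine Finset.mem_coe.mpr (Finset.mem_image_of_mem _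
            (Finset.mem_filter.mpr ⟨Finset.mem_univ _, Or.inl rfl⟩))
        · apply Submodule.sum_mem
          intro j' hj'
          apply Submodule.subset_span
          refine Finset.mem_coe.mpr (Finset.mem_image_of_mem _
            (Finset.mem_filter.mpr ⟨Finset.mem_univ _, Or.inr ?_⟩))
          exact Finset.ne_of_mem_erase hj'
    -- count : card P = ∑ m i - (n - 1)
    have hQ : (Finset.univ.filter (fun p : Σ i : Fin n, Fin (m i) =>
        ¬(p.1 = i₀ ∨ p.2 ≠ j0 p.1))) =
        (Finset.univ.erase i₀).image (fun i => (⟨i, j0 i⟩ : Σ i : Fin n, Fin (m i))) := by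
      ext p
      simp only [Finset.mem_filter, Finset.mem_univ, true_and, not_or, not_not,
        Finset.mem_image, Finset.mem_erase]
      constructor
      · rintro ⟨h1, h2⟩
        exact ⟨p.1, ⟨h1, trivial⟩, by
          obtain ⟨i, j⟩ := p
          simp only at h2
          rw [h2]⟩
      · rintro ⟨i, ⟨hi, -⟩, rfl⟩
        exact ⟨hi, rfl⟩
    have hQcard : (Finset.univ.filter (fun p : Σ i : Fin n, Fin (m i) =>
        ¬(p.1 = i₀ ∨ p.2 ≠ j0 p.1))).card = n - 1 := by
      rw [hQ, Finset.card_image_of_injective _ (fun a b hab => congrArg Sigma.fst hab),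
        Finset.card_erase_of_mem (Finset.mem_univ _), Finset.card_univ, Fintype.card_fin]
    have hcards : P.card + (n - 1) = ∑ i, m i := by
      rw [← hQcard, hP, Finset.card_filter_add_card_filter_not, Finset.card_univ]
      simp [Fintype.card_sigma]
    have hnle : n ≤ ∑ i, m i := by
      calc n = ∑ _i : Fin n, 1 := by simp
        _ ≤ ∑ i, m i := Finset.sum_le_sum fun i _ => hm i
    have hPcard : P.card ≤ ∑ i, m i - n + 1 := by omega
    -- conclude via the row-space characterization of rank
    have hle : Submodule.span ℝ (Set.range A) ≤
        Submodule.span ℝ (T : Set ((∀ i, Fin (m i)) → ℝ)) := by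
      rw [Submodule.span_le]
      rintro _ ⟨p, rfl⟩
      exact hspan p
    calc A.rank = Module.finrank ℝ (Submodule.span ℝ (Set.range A)) :=
          A.rank_eq_finrank_span_row
      _ ≤ Module.finrank ℝ (Submodule.span ℝ (T : Set ((∀ i, Fin (m i)) → ℝ))) :=
          Submodule.finrank_mono hle
      _ ≤ T.card := finrank_span_finset_le_card T
      _ ≤ P.card := Finset.card_image_le
      _ ≤ ∑ i, m i - n + 1 := hPcard

/-- Every vertex (extreme point) of `{w : Aw = d, w ≥ 0}` has at most `rank A`
nonzero coordinates; in particular, since the barycenter constraint matrix has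
rank at most `∑ m i − n + 1`, every vertex of the barycenter transport polytope
has at most `∑ m i − n + 1` nonzero coordinates. -/
theorem vertex_sparsity :
    (∀ (M N r : ℕ) (A : Matrix (Fin M) (Fin N) ℝ) (d : Fin M → ℝ),
      A.rank ≤ r →
      ∀ w ∈ Set.extremePoints ℝ
        {w : Fin N → ℝ | A.mulVec w = d ∧ ∀ j, 0 ≤ w j},
        (Finset.univ.filter (fun j => w j ≠ 0)).card ≤ r) ∧
    (∀ (n : ℕ) (m : Fin n → ℕ), (∀ i, 1 ≤ m i) →
      (Matrix.of (fun (p : Σ i : Fin n, Fin (m i)) (s : ∀ i, Fin (m i)) =>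
          if s p.1 = p.2 then (1 : ℝ) else 0)).rank ≤ ∑ i, m i - n + 1 ∧
      ∀ (d : (Σ i : Fin n, Fin (m i)) → ℝ)
        (w : (∀ i, Fin (m i)) → ℝ),
        w ∈ Set.extremePoints ℝ
          {w : (∀ i, Fin (m i)) → ℝ |
            (Matrix.of (fun (p : Σ i : Fin n, Fin (m i)) (s : ∀ i, Fin (m i)) =>
              if s p.1 = p.2 then (1 : ℝ) else 0)).mulVec w = d ∧ ∀ s, 0 ≤ w s} →
        (Finset.univ.filter (fun s : ∀ i, Fin (m i) => w s ≠ 0)).card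
          ≤ ∑ i, m i - n + 1) := by
  constructor
  · intro M N r A d hr w hw
    exact le_trans (vs_support_le_rank A d w hw) hr
  · intro n m hm
    refine ⟨vs_bary_rank n m hm, ?_⟩
    intro d w hw
    exact le_trans (vs_support_le_rank _ d w hw) (vs_bary_rank n m hm)
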